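/- Let ε ∈ (0,1) and let I be a nested discrete inventory staggering instance, i.e., when the items are indexed so that T_1 ≤ ⋯ ≤ T_n, each time interval T_i divides T_{i+1}. Let S_1, …, S_M be pairwise disjoint subsets of the items satisfying the separation property: T_{i1} ≤ ε·T_{i2} for every i1 ∈ S_{m1} and i2 ∈ S_{m2} with 1 ≤ m1 < m2 ≤ M. Then OPT^disc(I_{S_1 ∪ ⋯ ∪ S_M}) ≥ (1 − 2ε)·Σ_{m=1}^M OPT^disc(I_{S_m}), where I_S denotes the restriction of I to the items of S. -/

import Mathlib

noncomputable def invLevel (T H : ℕ) (τ t : ℤ) : ℝ :=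
  (H : ℝ) * (1 - (((t - τ) % (T : ℤ) : ℤ) : ℝ) / (T : ℝ))

noncomputable def totalInv {ι : Type*} [Fintype ι] (T H : ι → ℕ) (τ : ι → ℤ) (t : ℤ) : ℝ :=
  ∑ i, invLevel (T i) (H i) (τ i) t

def cycleLen {ι : Type*} [Fintype ι] (T : ι → ℕ) : ℕ := Finset.univ.lcm T

noncomputable def Imax {ι : Type*} [Fintype ι] (T H : ι → ℕ) (τ : ι → ℤ) : ℝ :=
  sSup (totalInv T H τ '' Set.Ico (0 : ℤ) (cycleLen T : ℤ))

noncomputable def OPTdisc {ι : Type*} [Fintype ι] (T H : ι → ℕ) : ℝ :=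
  sInf (Set.range (Imax T H))

section basic
variable {T H : ℕ}

lemma invLevel_nonneg (hT : 0 < T) (τ t : ℤ) : 0 ≤ invLevel T H τ t := by
  have hT' : (0:ℝ) < (T:ℝ) := by exact_mod_cast hT
  have h1 : (t - τ) % (T:ℤ) < (T:ℤ) := Int.emod_lt_of_pos _ (by exact_mod_cast hT)
  have h2 : ((((t - τ) % (T:ℤ)):ℤ):ℝ) < (T:ℝ) := by exact_mod_cast h1
  have : ((((t - τ) % (T:ℤ)):ℤ):ℝ) / (T:ℝ) < 1 := (div_lt_one hT').mpr h2
  have hH : (0:ℝ) ≤ (H:ℝ) := Nat.cast_nonneg H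
  unfold invLevel
  nlinarith

lemma invLevel_le (hT : 0 < T) (τ t : ℤ) : invLevel T H τ t ≤ (H:ℝ) := by
  have hT' : (0:ℝ) < (T:ℝ) := by exact_mod_cast hT
  have h1 : 0 ≤ (t - τ) % (T:ℤ) := Int.emod_nonneg _ (by positivity)
  have h2 : (0:ℝ) ≤ ((((t - τ) % (T:ℤ)):ℤ):ℝ) := by exact_mod_cast h1
  have hH : (0:ℝ) ≤ (H:ℝ) := Nat.cast_nonneg H
  unfold invLevel
  have : (0:ℝ) ≤ ((((t - τ) % (T:ℤ)):ℤ):ℝ) / (T:ℝ) := by positivity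
  nlinarith

lemma invLevel_period (τ t c : ℤ) (h : (T:ℤ) ∣ c) :
    invLevel T H τ (t + c) = invLevel T H τ t := by
  obtain ⟨q, rfl⟩ := h
  unfold invLevel
  rw [show t + (T:ℤ) * q - τ = (t - τ) + (T:ℤ) * q by ring, Int.add_mul_emod_self_left]

lemma invLevel_drop (hT : 0 < T) (τ t d : ℤ) (hd : 0 ≤ d) :
    invLevel T H τ t - (d:ℝ) * (H:ℝ) / (T:ℝ) ≤ invLevel T H τ (t + d) := by
  have hT' : (0:ℝ) < (T:ℝ) := by exact_mod_cast hT
  have hTz : (0:ℤ) < (T:ℤ) := by exact_mod_cast hT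
  set a := t - τ with ha
  have key : (a + d) % (T:ℤ) ≤ a % (T:ℤ) + d := by
    have h1 : (a + d) % (T:ℤ) = (a % (T:ℤ) + d) % (T:ℤ) := by
      conv_lhs => rw [← Int.emod_add_mul_ediv a (T:ℤ)]
      rw [show a % (T:ℤ) + (T:ℤ) * (a / (T:ℤ)) + d = (a % (T:ℤ) + d) + (T:ℤ) * (a / (T:ℤ)) by ring,
        Int.add_mul_emod_self_left]
    rw [h1]
    have h2 : 0 ≤ a % (T:ℤ) + d := add_nonneg (Int.emod_nonneg _ hTz.ne') hd
    have h3 : 0 ≤ (T:ℤ) * ((a % (T:ℤ) + d) / (T:ℤ)) :=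
      mul_nonneg hTz.le (Int.ediv_nonneg h2 hTz.le)
    rw [Int.emod_def (a % (T:ℤ) + d) (T:ℤ)]
    omega
  have hub : (((a + d) % (T:ℤ) : ℤ) : ℝ) ≤ ((a % (T:ℤ) : ℤ) : ℝ) + (d:ℝ) := by
    have : (((a + d) % (T:ℤ) : ℤ) : ℝ) ≤ (((a % (T:ℤ) + d) : ℤ) : ℝ) := Int.cast_le.mpr key
    push_cast at this ⊢
    linarith
  have hH : (0:ℝ) ≤ (H:ℝ) := Nat.cast_nonneg H
  unfold invLevel
  rw [show t + d - τ = a + d by rw [ha]; ring]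
  have expand : (H:ℝ) * (1 - (((a + d) % (T:ℤ) : ℤ):ℝ) / (T:ℝ))
      ≥ (H:ℝ) * (1 - ((((a % (T:ℤ)) : ℤ):ℝ) + (d:ℝ)) / (T:ℝ)) := by
    apply mul_le_mul_of_nonneg_left _ hH
    apply sub_le_sub_left
    gcongr
  refine le_trans ?_ expand
  have : ((((a % (T:ℤ)) : ℤ):ℝ) + (d:ℝ)) / (T:ℝ) = (((a % (T:ℤ) : ℤ)):ℝ) / (T:ℝ) + (d:ℝ)/(T:ℝ) := by
    ring
  rw [this]
  have : (d:ℝ) * (H:ℝ) / (T:ℝ) = (H:ℝ) * ((d:ℝ)/(T:ℝ)) := by ring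
  rw [this]
  ring_nf
  nlinarith [hT']

end basic

section sums

lemma sum_emod_one (T : ℕ) (hT : 0 < T) (τ : ℤ) :
    ∑ s ∈ Finset.range T, (((s:ℤ) - τ) % (T:ℤ)) = ∑ r ∈ Finset.range T, (r:ℤ) := by
  have hTz : (0:ℤ) < (T:ℤ) := by exact_mod_cast hT
  refine Finset.sum_nbij' (fun s => (((s:ℤ) - τ) % (T:ℤ)).toNat)
    (fun r => (((r:ℤ) + τ) % (T:ℤ)).toNat) ?_ ?_ ?_ ?_ ?_
  · intro s _
    have h1 : 0 ≤ ((s:ℤ) - τ) % (T:ℤ) := Int.emod_nonneg _ hTz.ne'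
    have h2 : ((s:ℤ) - τ) % (T:ℤ) < (T:ℤ) := Int.emod_lt_of_pos _ hTz
    simp only [Finset.mem_range]
    omega
  · intro r _
    have h1 : 0 ≤ ((r:ℤ) + τ) % (T:ℤ) := Int.emod_nonneg _ hTz.ne'
    have h2 : ((r:ℤ) + τ) % (T:ℤ) < (T:ℤ) := Int.emod_lt_of_pos _ hTz
    simp only [Finset.mem_range]
    omega
  · intro s hs
    simp only [Finset.mem_range] at hs
    have h1 : 0 ≤ ((s:ℤ) - τ) % (T:ℤ) := Int.emod_nonneg _ hTz.ne'
    have hc : ((((s:ℤ) - τ) % (T:ℤ)).toNat : ℤ) = ((s:ℤ) - τ) % (T:ℤ) := Int.toNat_of_nonneg h1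
    have key : ((((s:ℤ) - τ) % (T:ℤ)) + τ) % (T:ℤ) = (s:ℤ) := by
      rw [Int.add_emod, Int.emod_emod_of_dvd _ dvd_rfl, ← Int.add_emod]
      rw [sub_add_cancel]
      exact Int.emod_eq_of_lt (by positivity) (by exact_mod_cast hs)
    show ((((((s:ℤ) - τ) % (T:ℤ)).toNat : ℤ) + τ) % (T:ℤ)).toNat = s
    rw [hc, key]
    omega
  · intro r hr
    simp only [Finset.mem_range] at hr
    have h1 : 0 ≤ ((r:ℤ) + τ) % (T:ℤ) := Int.emod_nonneg _ hTz.ne'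
    have hc : ((((r:ℤ) + τ) % (T:ℤ)).toNat : ℤ) = ((r:ℤ) + τ) % (T:ℤ) := Int.toNat_of_nonneg h1
    have key : ((((r:ℤ) + τ) % (T:ℤ)) - τ) % (T:ℤ) = (r:ℤ) := by
      rw [Int.sub_emod, Int.emod_emod_of_dvd _ dvd_rfl, ← Int.sub_emod]
      rw [add_sub_cancel_right]
      exact Int.emod_eq_of_lt (by positivity) (by exact_mod_cast hr)
    show ((((((r:ℤ) + τ) % (T:ℤ)).toNat : ℤ) - τ) % (T:ℤ)).toNat = r
    rw [hc, key]
    omega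
  · intro s _
    have h1 : 0 ≤ ((s:ℤ) - τ) % (T:ℤ) := Int.emod_nonneg _ hTz.ne'
    exact (Int.toNat_of_nonneg h1).symm

lemma sum_emod_range (T : ℕ) (hT : 0 < T) (τ : ℤ) (q : ℕ) :
    ∑ t ∈ Finset.range (q * T), (((t:ℤ) - τ) % (T:ℤ)) = q * ∑ r ∈ Finset.range T, (r:ℤ) := by
  induction q with
  | zero => simp
  | succ q ih =>
    have hsplit : (q + 1) * T = q * T + T := by ring
    rw [hsplit, Finset.range_eq_Ico,
      ← Finset.sum_Ico_consecutive _ (Nat.zero_le (q*T)) (Nat.le_add_right (q*T) T),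
      ← Finset.range_eq_Ico, ih, Finset.sum_Ico_eq_sum_range]
    have : ∀ s ∈ Finset.range (q*T + T - q*T), (((q*T + s : ℕ):ℤ) - τ) % (T:ℤ)
        = ((s:ℤ) - (τ - (T:ℤ)*q)) % (T:ℤ) := by
      intro s _
      have : ((q*T + s : ℕ):ℤ) - τ = (s:ℤ) - (τ - (T:ℤ)*q) := by push_cast; ring
      rw [this]
    rw [Finset.sum_congr rfl this]
    have hrw : q*T + T - q*T = T := by omega
    rw [hrw, sum_emod_one T hT (τ - (T:ℤ)*q)]
    push_cast
    ring

lemma sum_invLevel_ge {T H : ℕ} (hT : 0 < T) (τ : ℤ) {P : ℕ} (hd : T ∣ P) :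
    (P:ℝ) * (H:ℝ) / 2 ≤ ∑ t ∈ Finset.range P, invLevel T H τ (t:ℤ) := by
  obtain ⟨q, rfl⟩ := hd
  have hT' : (0:ℝ) < (T:ℝ) := by exact_mod_cast hT
  have hsum : ∑ t ∈ Finset.range (T*q), (((t:ℤ) - τ) % (T:ℤ)) = q * ∑ r ∈ Finset.range T, (r:ℤ) := by
    rw [show T*q = q*T by ring]; exact sum_emod_range T hT τ q
  have hg2 : 2 * (∑ r ∈ Finset.range T, (r:ℤ)) ≤ (T:ℤ) * (T:ℤ) := by
    have h1 : (∑ r ∈ Finset.range T, r) * 2 ≤ T * T := by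
      rw [Finset.sum_range_id_mul_two]
      exact Nat.mul_le_mul_left _ (Nat.sub_le _ _)
    have h2 : (((∑ r ∈ Finset.range T, r) * 2 : ℕ) : ℤ) ≤ ((T*T : ℕ):ℤ) := by exact_mod_cast h1
    push_cast at h2
    linarith
  have hbound : 2 * (∑ t ∈ Finset.range (T*q), (((t:ℤ) - τ) % (T:ℤ))) ≤ (T:ℤ) * q * T := by
    rw [hsum]
    nlinarith [hg2, Int.ofNat_nonneg q, Int.ofNat_nonneg T]
  -- real computation
  have expand : ∑ t ∈ Finset.range (T*q), invLevel T H τ (t:ℤ)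
      = (T:ℝ)*(q:ℝ) * (H:ℝ) - (H:ℝ)/(T:ℝ) * ((∑ t ∈ Finset.range (T*q), ((((t:ℤ) - τ) % (T:ℤ) : ℤ):ℝ))) := by
    unfold invLevel
    rw [Finset.sum_congr rfl (fun t _ => by ring : ∀ t ∈ Finset.range (T*q),
      (H:ℝ) * (1 - ((((t:ℤ) - τ) % (T:ℤ) : ℤ):ℝ) / (T:ℝ))
        = (H:ℝ) - (H:ℝ)/(T:ℝ) * ((((t:ℤ) - τ) % (T:ℤ) : ℤ):ℝ))]
    rw [Finset.sum_sub_distrib, Finset.sum_const, Finset.card_range, Finset.mul_sum, nsmul_eq_mul]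
    push_cast
    ring
  rw [expand]
  have hcast : (∑ t ∈ Finset.range (T*q), ((((t:ℤ) - τ) % (T:ℤ) : ℤ):ℝ))
      = ((∑ t ∈ Finset.range (T*q), (((t:ℤ) - τ) % (T:ℤ)) : ℤ) : ℝ) := by push_cast; ring
  rw [hcast]
  have hb : ((∑ t ∈ Finset.range (T*q), (((t:ℤ) - τ) % (T:ℤ)) : ℤ) : ℝ) ≤ ((T:ℝ) * q * T)/2 := by
    have h3 : ((2 * (∑ t ∈ Finset.range (T*q), (((t:ℤ) - τ) % (T:ℤ))) : ℤ):ℝ) ≤ (((T:ℤ) * q * T : ℤ):ℝ) :=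
      by exact_mod_cast hbound
    push_cast at h3
    linarith
  have hH : (0:ℝ) ≤ (H:ℝ) := Nat.cast_nonneg H
  have hHT : 0 ≤ (H:ℝ)/(T:ℝ) := by positivity
  have hx := mul_le_mul_of_nonneg_left hb hHT
  have heq : (H:ℝ)/(T:ℝ) * ((T:ℝ)*(q:ℝ)*(T:ℝ)/2) = (T:ℝ)*(q:ℝ)*(H:ℝ)/2 := by
    field_simp
  have hP : ((T*q : ℕ):ℝ) = (T:ℝ)*(q:ℝ) := by push_cast; ring
  rw [hP]
  linarith

end sums

section lcm

lemma finset_lcm_pos {β : Type*} (s : Finset β) (f : β → ℕ) (hf : ∀ b ∈ s, 0 < f b) :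
    0 < s.lcm f := by
  classical
  induction s using Finset.induction_on with
  | empty => simp [Finset.lcm_empty]
  | @insert a s' hb ih =>
    rw [Finset.lcm_insert]
    exact Nat.lcm_pos (hf a (Finset.mem_insert_self a s'))
      (ih fun b hb' => hf b (Finset.mem_insert_of_mem hb'))

end lcm

section asum

variable {n : ℕ}

lemma asum_nonneg (T H : Fin n → ℕ) (hT : ∀ i, 0 < T i) (τ : Fin n → ℤ)
    (A : Finset (Fin n)) (t : ℤ) : 0 ≤ ∑ i ∈ A, invLevel (T i) (H i) (τ i) t :=
  Finset.sum_nonneg fun i _ => invLevel_nonneg (hT i) _ _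

lemma asum_le_sumH (T H : Fin n → ℕ) (hT : ∀ i, 0 < T i) (τ : Fin n → ℤ)
    (A : Finset (Fin n)) (t : ℤ) :
    ∑ i ∈ A, invLevel (T i) (H i) (τ i) t ≤ ∑ i ∈ A, (H i : ℝ) :=
  Finset.sum_le_sum fun i _ => invLevel_le (hT i) _ _

lemma asum_period (T H : Fin n → ℕ) (τ : Fin n → ℤ) (A : Finset (Fin n)) (t c : ℤ)
    (hc : ∀ i ∈ A, (T i : ℤ) ∣ c) :
    ∑ i ∈ A, invLevel (T i) (H i) (τ i) (t + c) = ∑ i ∈ A, invLevel (T i) (H i) (τ i) t :=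
  Finset.sum_congr rfl fun i hi => invLevel_period _ _ _ (hc i hi)

lemma totalInv_subtype (T H : Fin n → ℕ) (τ : Fin n → ℤ) (A : Finset (Fin n)) (t : ℤ) :
    totalInv (fun i : {x // x ∈ A} => T i.1) (fun i => H i.1) (fun i => τ i.1) t
      = ∑ i ∈ A, invLevel (T i) (H i) (τ i) t := by
  unfold totalInv
  exact Finset.sum_coe_sort A fun i => invLevel (T i) (H i) (τ i) t

lemma cycleLen_subtype (T : Fin n → ℕ) (A : Finset (Fin n)) :
    cycleLen (fun i : {x // x ∈ A} => T i.1) = A.lcm T := by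
  unfold cycleLen
  refine Nat.dvd_antisymm ?_ ?_
  · exact Finset.lcm_dvd fun i _ => Finset.dvd_lcm i.2
  · exact Finset.lcm_dvd fun i hi => Finset.dvd_lcm (Finset.mem_univ (⟨i, hi⟩ : {x // x ∈ A}))

/-- The peak package: value `v` of the peak of the restriction to `A`. -/
lemma peak_package (T H : Fin n → ℕ) (hT : ∀ i, 0 < T i) (τ : Fin n → ℤ) (A : Finset (Fin n))
    [inst : Fintype {x // x ∈ A}] :
    ∃ v : ℝ,
      v = Imax (fun i : {x // x ∈ A} => T i.1) (fun i => H i.1) (fun i => τ i.1) ∧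
      (∃ t0 : ℤ, (∑ i ∈ A, invLevel (T i) (H i) (τ i) t0) = v) ∧
      OPTdisc (fun i : {x // x ∈ A} => T i.1) (fun i => H i.1) ≤ v ∧
      (∑ i ∈ A, (H i : ℝ)) / 2 ≤ v ∧
      (∀ t : ℤ, (∑ i ∈ A, invLevel (T i) (H i) (τ i) t) ≤ v) := by
  obtain rfl : inst = Finset.Subtype.fintype A := Subsingleton.elim _ _
  classical
  set P : ℕ := A.lcm T with hP
  have hPpos : 0 < P := finset_lcm_pos A T fun i _ => hT i
  have hPz : (0:ℤ) < (P:ℤ) := by exact_mod_cast hPpos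
  set f : ℤ → ℝ := fun t => ∑ i ∈ A, invLevel (T i) (H i) (τ i) t with hf
  set V : Set ℝ := f '' Set.Ico (0:ℤ) (P:ℤ) with hV
  have hVne : V.Nonempty := ⟨f 0, ⟨0, ⟨le_refl 0, hPz⟩, rfl⟩⟩
  have hVfin : V.Finite := Set.Finite.image f (Set.finite_Ico _ _)
  set v : ℝ := sSup V with hv
  have hVbdd : BddAbove V := hVfin.bddAbove
  -- reduction of any t into the window
  have hred : ∀ t : ℤ, ∃ t' : ℤ, t' ∈ Set.Ico (0:ℤ) (P:ℤ) ∧ f t' = f t := by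
    intro t
    refine ⟨t % (P:ℤ), ⟨Int.emod_nonneg t hPz.ne', Int.emod_lt_of_pos t hPz⟩, ?_⟩
    have heq : f (t % (P:ℤ) + (P:ℤ) * (t / (P:ℤ))) = f t := by
      rw [Int.emod_add_mul_ediv]
    rw [← heq]
    exact (asum_period T H τ A (t % (P:ℤ)) ((P:ℤ) * (t / (P:ℤ)))
      (fun i hi => Dvd.dvd.mul_right (by exact_mod_cast Finset.dvd_lcm hi) _)).symm
  have hub : ∀ t : ℤ, f t ≤ v := by
    intro t
    obtain ⟨t', ht', heq⟩ := hred t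
    rw [← heq]
    exact le_csSup hVbdd ⟨t', ht', rfl⟩
  have hmem : v ∈ V := hVne.csSup_mem hVfin
  obtain ⟨t0, _, ht0⟩ := hmem
  -- Imax equality
  have hImax : Imax (fun i : {x // x ∈ A} => T i.1) (fun i => H i.1) (fun i => τ i.1) = v := by
    unfold Imax
    rw [hv, hV]
    congr 1
    rw [cycleLen_subtype T A]
    ext x
    constructor
    · rintro ⟨t, ht, rfl⟩
      exact ⟨t, ht, (totalInv_subtype T H τ A t).symm ▸ rfl⟩
    · rintro ⟨t, ht, rfl⟩
      exact ⟨t, ht, totalInv_subtype T H τ A t⟩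
  -- average bound
  have havg : (∑ i ∈ A, (H i : ℝ)) / 2 ≤ v := by
    have hsum1 : ∀ i ∈ A, (P:ℝ) * (H i : ℝ) / 2 ≤ ∑ t ∈ Finset.range P, invLevel (T i) (H i) (τ i) (t:ℤ) :=
      fun i hi => sum_invLevel_ge (hT i) (τ i) (Finset.dvd_lcm hi)
    have h1 : (P:ℝ) * ((∑ i ∈ A, (H i:ℝ)) / 2) ≤ ∑ t ∈ Finset.range P, f (t:ℤ) := by
      rw [hf]
      rw [Finset.sum_comm]
      calc (P:ℝ) * ((∑ i ∈ A, (H i:ℝ)) / 2) = ((P:ℝ) * ∑ i ∈ A, (H i:ℝ)) / 2 := by ring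
        _ = ∑ i ∈ A, (P:ℝ) * (H i:ℝ) / 2 := by rw [Finset.mul_sum, Finset.sum_div]
        _ ≤ _ := Finset.sum_le_sum hsum1
    have h2 : ∑ t ∈ Finset.range P, f (t:ℤ) ≤ (P:ℝ) * v := by
      calc ∑ t ∈ Finset.range P, f (t:ℤ) ≤ ∑ _t ∈ Finset.range P, v :=
            Finset.sum_le_sum fun t _ => hub _
        _ = (P:ℝ) * v := by rw [Finset.sum_const, Finset.card_range, nsmul_eq_mul]
    have hPr : (0:ℝ) < (P:ℝ) := by exact_mod_cast hPpos
    nlinarith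
  -- OPT bound
  have hOPT : OPTdisc (fun i : {x // x ∈ A} => T i.1) (fun i => H i.1) ≤ v := by
    unfold OPTdisc
    rw [← hImax]
    apply csInf_le
    · refine ⟨0, ?_⟩
      rintro x ⟨τ', rfl⟩
      -- Imax nonneg for arbitrary τ'
      unfold Imax
      have hcyc : cycleLen (fun i : {x // x ∈ A} => T i.1) = P := cycleLen_subtype T A
      have h0 : (0:ℤ) ∈ Set.Ico (0:ℤ) ((cycleLen (fun i : {x // x ∈ A} => T i.1) : ℕ) : ℤ) := by
        rw [hcyc]; exact ⟨le_refl 0, hPz⟩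
      have hbdd : BddAbove (totalInv (fun i : {x // x ∈ A} => T i.1) (fun i => H i.1) τ' ''
          Set.Ico (0:ℤ) ((cycleLen (fun i : {x // x ∈ A} => T i.1) : ℕ) : ℤ)) :=
        (Set.Finite.image _ (Set.finite_Ico _ _)).bddAbove
      have hval : 0 ≤ totalInv (fun i : {x // x ∈ A} => T i.1) (fun i => H i.1) τ' 0 :=
        Finset.sum_nonneg fun i _ => invLevel_nonneg (hT i.1) _ _
      exact hval.trans (le_csSup hbdd ⟨0, h0, rfl⟩)
    · exact ⟨fun i => τ i.1, rfl⟩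
  exact ⟨v, hImax.symm, ⟨t0, ht0⟩, hOPT, havg, hub⟩

end asum

section nonneg
variable {n : ℕ}

lemma Imax_sub_nonneg (T H : Fin n → ℕ) (hT : ∀ i, 0 < T i) (A : Finset (Fin n))
    [inst : Fintype {x // x ∈ A}]
    (τ' : {x // x ∈ A} → ℤ) :
    0 ≤ Imax (fun i : {x // x ∈ A} => T i.1) (fun i => H i.1) τ' := by
  obtain rfl : inst = Finset.Subtype.fintype A := Subsingleton.elim _ _
  unfold Imax
  have hPpos : 0 < cycleLen (fun i : {x // x ∈ A} => T i.1) := by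
    rw [cycleLen_subtype T A]
    exact finset_lcm_pos A T fun i _ => hT i
  have hPz : (0:ℤ) < ((cycleLen (fun i : {x // x ∈ A} => T i.1) : ℕ) : ℤ) := by exact_mod_cast hPpos
  have h0 : (0:ℤ) ∈ Set.Ico (0:ℤ) ((cycleLen (fun i : {x // x ∈ A} => T i.1) : ℕ) : ℤ) :=
    ⟨le_refl 0, hPz⟩
  have hbdd : BddAbove (totalInv (fun i : {x // x ∈ A} => T i.1) (fun i => H i.1) τ' ''
      Set.Ico (0:ℤ) ((cycleLen (fun i : {x // x ∈ A} => T i.1) : ℕ) : ℤ)) :=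
    (Set.Finite.image _ (Set.finite_Ico _ _)).bddAbove
  have hval : 0 ≤ totalInv (fun i : {x // x ∈ A} => T i.1) (fun i => H i.1) τ' 0 :=
    Finset.sum_nonneg fun i _ => invLevel_nonneg (hT i.1) _ _
  exact hval.trans (le_csSup hbdd ⟨0, h0, rfl⟩)

lemma OPTdisc_sub_nonneg (T H : Fin n → ℕ) (hT : ∀ i, 0 < T i) (A : Finset (Fin n))
    [inst : Fintype {x // x ∈ A}] :
    0 ≤ OPTdisc (fun i : {x // x ∈ A} => T i.1) (fun i => H i.1) := by
  obtain rfl : inst = Finset.Subtype.fintype A := Subsingleton.elim _ _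
  unfold OPTdisc
  refine le_csInf ⟨_, Set.mem_range_self (fun _ => 0)⟩ ?_
  rintro b ⟨τ', rfl⟩
  exact Imax_sub_nonneg T H hT A τ'

lemma lcm_eq_of_nested (T : Fin n → ℕ) (hnested : ∀ i j : Fin n, i ≤ j → T i ∣ T j)
    (B : Finset (Fin n)) (hB : B.Nonempty) : ∃ j ∈ B, B.lcm T = T j := by
  refine ⟨B.max' hB, B.max'_mem hB, Nat.dvd_antisymm ?_ (Finset.dvd_lcm (B.max'_mem hB))⟩
  exact Finset.lcm_dvd fun i hi => hnested i _ (B.le_max' i hi)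

end nonneg

/-- Near-additivity for nested instances: if the time intervals are nested
(`T_i ∣ T_j` whenever `i ≤ j`) and `S_1, …, S_M` are pairwise disjoint item subsets
satisfying the separation property `T_{i1} ≤ ε·T_{i2}` for `i1 ∈ S_{m1}`, `i2 ∈ S_{m2}`
with `m1 < m2`, then `OPT^disc(I_{S_1∪⋯∪S_M}) ≥ (1−2ε)·Σ_m OPT^disc(I_{S_m})`. -/
theorem stmt17 {n : ℕ} (T H : Fin n → ℕ) (hT : ∀ i, 0 < T i) (hH : ∀ i, 0 < H i)
    (hnested : ∀ i j : Fin n, i ≤ j → T i ∣ T j)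
    (ε : ℝ) (hε : ε ∈ Set.Ioo (0 : ℝ) 1)
    (M : ℕ) (S : Fin M → Finset (Fin n))
    (hdisj : ∀ m1 m2, m1 ≠ m2 → Disjoint (S m1) (S m2))
    (hsep : ∀ m1 m2 : Fin M, m1 < m2 →
      ∀ i1 ∈ S m1, ∀ i2 ∈ S m2, (T i1 : ℝ) ≤ ε * (T i2 : ℝ)) :
    (1 - 2 * ε) * ∑ m, OPTdisc (fun i : {x // x ∈ S m} => T i.1) (fun i => H i.1)
      ≤ OPTdisc (fun i : {x // x ∈ Finset.univ.biUnion S} => T i.1)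
          (fun i => H i.1) := by
  have main : ∀ (instS : ∀ m : Fin M, Fintype {x // x ∈ S m})
      (instU : Fintype {x // x ∈ Finset.univ.biUnion S}),
      (1 - 2 * ε) * ∑ m, @OPTdisc _ (instS m) (fun i : {x // x ∈ S m} => T i.1) (fun i => H i.1)
        ≤ @OPTdisc _ instU (fun i : {x // x ∈ Finset.univ.biUnion S} => T i.1)
            (fun i => H i.1) := by
    intro instS instU
    obtain rfl : instS = fun m => Finset.Subtype.fintype (S m) :=
      funext fun m => Subsingleton.elim _ _
    obtain rfl : instU = Finset.Subtype.fintype _ := Subsingleton.elim _ _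
    classical
    obtain ⟨hε0, hε1⟩ := hε
    set U := Finset.univ.biUnion S with hU
    clear_value U
    rcases le_or_gt (1 - 2*ε) 0 with hhalf | hhalf
    · have h1 : 0 ≤ ∑ m, OPTdisc (fun i : {x // x ∈ S m} => T i.1) (fun i => H i.1) :=
        Finset.sum_nonneg fun m _ => OPTdisc_sub_nonneg T H hT (S m)
      have h2 : 0 ≤ OPTdisc (fun i : {x // x ∈ U} => T i.1) (fun i => H i.1) :=
        OPTdisc_sub_nonneg T H hT U
      calc (1 - 2 * ε) * ∑ m, OPTdisc (fun i : {x // x ∈ S m} => T i.1) (fun i => H i.1)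
          ≤ 0 := mul_nonpos_iff.mpr (Or.inr ⟨hhalf, h1⟩)
        _ ≤ _ := h2
    · rw [show OPTdisc (fun i : {x // x ∈ U} => T i.1) (fun i => H i.1)
          = sInf (Set.range (Imax (fun i : {x // x ∈ U} => T i.1) (fun i => H i.1))) from rfl]
      refine le_csInf ⟨_, Set.mem_range_self (fun _ => 0)⟩ ?_
      rintro b ⟨τ', rfl⟩
      set τ : Fin n → ℤ := fun i => if h : i ∈ U then τ' ⟨i, h⟩ else 0 with hτdef
      have hτres : (fun i : {x // x ∈ U} => τ i.1) = τ' := funext fun i => dif_pos i.2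
      -- main induction
      have key : ∀ k : ℕ, ∃ t : ℤ,
          (1 - 2*ε) * ∑ m ∈ Finset.univ.filter (fun m : Fin M => (m:ℕ) < k),
              OPTdisc (fun i : {x // x ∈ S m} => T i.1) (fun i => H i.1)
            ≤ ∑ i ∈ (Finset.univ.filter (fun m : Fin M => (m:ℕ) < k)).biUnion S,
                invLevel (T i) (H i) (τ i) t := by
        intro k
        induction k with
        | zero => exact ⟨0, by simp⟩
        | succ k ih =>
          rcases lt_or_ge k M with hk | hk
          · obtain ⟨t1, ht1⟩ := ih
            set km : Fin M := ⟨k, hk⟩ with hkm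
            have hins : (Finset.univ.filter (fun m : Fin M => (m:ℕ) < k+1))
                = insert km (Finset.univ.filter (fun m : Fin M => (m:ℕ) < k)) := by
              ext m
              simp only [Finset.mem_filter, Finset.mem_insert, Finset.mem_univ, true_and, hkm,
                Fin.ext_iff]
              omega
            have hnotmem : km ∉ Finset.univ.filter (fun m : Fin M => (m:ℕ) < k) := by
              simp [hkm]
            set Uk := (Finset.univ.filter (fun m : Fin M => (m:ℕ) < k)).biUnion S with hUk
            have hdisjk : Disjoint (S km) Uk := by
              rw [hUk, Finset.disjoint_biUnion_right]
              intro m hm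
              have hmk : (m:ℕ) < k := (Finset.mem_filter.mp hm).2
              refine hdisj km m ?_
              intro h
              have hval : (m:ℕ) = k := by rw [← h]
              omega
            -- peak package for S km
            obtain ⟨v, hvI, ⟨t0, ht0⟩, hOPT, hH2, hub⟩ := peak_package T H hT τ (S km)
            -- window length
            set P : ℕ := Uk.lcm T with hPdef
            have hPpos : 0 < P := finset_lcm_pos Uk T fun i _ => hT i
            have hPz : (0:ℤ) < (P:ℤ) := by exact_mod_cast hPpos
            set d : ℤ := (t1 - t0) % (P:ℤ) with hd
            have hd0 : 0 ≤ d := Int.emod_nonneg _ hPz.ne'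
            have hdP : d < (P:ℤ) := Int.emod_lt_of_pos _ hPz
            set t : ℤ := t0 + d with htdef
            refine ⟨t, ?_⟩
            rw [hins, Finset.sum_insert hnotmem, Finset.biUnion_insert, ← hUk,
              Finset.sum_union hdisjk]
            -- Uk part
            have hUkt : ∑ i ∈ Uk, invLevel (T i) (H i) (τ i) t
                = ∑ i ∈ Uk, invLevel (T i) (H i) (τ i) t1 := by
              have hsplit : t1 = t + (P:ℤ) * ((t1 - t0) / (P:ℤ)) := by
                have h := Int.emod_add_mul_ediv (t1 - t0) (P:ℤ)
                rw [htdef, hd]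
                linarith
              conv_rhs => rw [hsplit]
              exact (asum_period T H τ Uk t ((P:ℤ) * ((t1 - t0) / (P:ℤ)))
                (fun i hi => Dvd.dvd.mul_right (by exact_mod_cast Finset.dvd_lcm hi) _)).symm
            have hB : (1 - 2*ε) * ∑ m ∈ Finset.univ.filter (fun m : Fin M => (m:ℕ) < k),
                OPTdisc (fun i : {x // x ∈ S m} => T i.1) (fun i => H i.1)
                  ≤ ∑ i ∈ Uk, invLevel (T i) (H i) (τ i) t := by
              rw [hUkt]; exact ht1
            -- separation bound
            have hsep' : ∀ i ∈ S km, ((P:ℝ) - 1) ≤ ε * (T i : ℝ) := by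
              intro i hi
              rcases Finset.eq_empty_or_nonempty Uk with hUke | hUkne
              · rw [hPdef, hUke, Finset.lcm_empty]
                have : (0:ℝ) ≤ ε * (T i : ℝ) := by positivity
                simpa using this
              · obtain ⟨j, hj, hPj⟩ := lcm_eq_of_nested T hnested Uk hUkne
                rw [hUk] at hj
                obtain ⟨m, hm, hjm⟩ := Finset.mem_biUnion.mp hj
                have hmk : (m:ℕ) < k := (Finset.mem_filter.mp hm).2
                have hmlt : m < km := by rw [hkm]; exact Fin.mk_lt_mk.mpr hmk |>.trans_le (le_refl _)
                have := hsep m km hmlt j hjm i hi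
                rw [← hPj] at this
                rw [hPdef]
                linarith
            -- drop bound for the group
            have hdrop : ∀ i ∈ S km,
                invLevel (T i) (H i) (τ i) t0 - (d:ℝ) * (H i:ℝ) / (T i:ℝ)
                  ≤ invLevel (T i) (H i) (τ i) t := by
              intro i hi
              rw [htdef]
              exact invLevel_drop (hT i) (τ i) t0 d hd0
            have hdropsum : v - ε * ∑ i ∈ S km, (H i:ℝ)
                ≤ ∑ i ∈ S km, invLevel (T i) (H i) (τ i) t := by
              have h1 : ∑ i ∈ S km, (invLevel (T i) (H i) (τ i) t0 - (d:ℝ) * (H i:ℝ) / (T i:ℝ))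
                  ≤ ∑ i ∈ S km, invLevel (T i) (H i) (τ i) t := Finset.sum_le_sum hdrop
              rw [Finset.sum_sub_distrib, ht0] at h1
              have h2 : ∑ i ∈ S km, (d:ℝ) * (H i:ℝ) / (T i:ℝ) ≤ ∑ i ∈ S km, ε * (H i:ℝ) := by
                refine Finset.sum_le_sum fun i hi => ?_
                have hTi : (0:ℝ) < (T i:ℝ) := by exact_mod_cast hT i
                rw [div_le_iff₀ hTi]
                have hdR : (d:ℝ) ≤ (P:ℝ) - 1 := by
                  have hle : d ≤ (P:ℤ) - 1 := by omega
                  have hle2 : ((d:ℤ):ℝ) ≤ (((P:ℤ) - 1 : ℤ):ℝ) := Int.cast_le.mpr hle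
                  push_cast at hle2 ⊢
                  linarith
                have hHi : (0:ℝ) ≤ (H i:ℝ) := Nat.cast_nonneg _
                nlinarith [hsep' i hi]
              rw [← Finset.mul_sum] at h2
              linarith
            have hA : (1 - 2*ε) * OPTdisc (fun i : {x // x ∈ S km} => T i.1) (fun i => H i.1)
                ≤ ∑ i ∈ S km, invLevel (T i) (H i) (τ i) t := by
              have hεH : ε * ∑ i ∈ S km, (H i:ℝ) ≤ 2 * ε * v := by nlinarith
              nlinarith
            linarith
          · obtain ⟨t1, ht1⟩ := ih
            have h1 : Finset.univ.filter (fun m : Fin M => (m:ℕ) < k) = Finset.univ :=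
              Finset.filter_true_of_mem fun m _ => lt_of_lt_of_le m.isLt hk
            have h2 : Finset.univ.filter (fun m : Fin M => (m:ℕ) < k+1) = Finset.univ :=
              Finset.filter_true_of_mem fun m _ => lt_of_lt_of_le m.isLt (Nat.le_succ_of_le hk)
            rw [h1] at ht1
            rw [h2]
            exact ⟨t1, ht1⟩
      obtain ⟨t, ht⟩ := key M
      have hfilter : Finset.univ.filter (fun m : Fin M => (m:ℕ) < M) = Finset.univ :=
        Finset.filter_true_of_mem fun m _ => m.isLt
      rw [hfilter, ← hU] at ht
      obtain ⟨v, hvI, _, _, _, hub⟩ := peak_package T H hT τ U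
      rw [hτres] at hvI
      calc (1 - 2 * ε) * ∑ m, OPTdisc (fun i : {x // x ∈ S m} => T i.1) (fun i => H i.1)
          ≤ ∑ i ∈ U, invLevel (T i) (H i) (τ i) t := ht
        _ ≤ v := hub t
        _ = _ := hvI
  exact main _ _
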